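/- (Projective Thales' theorem) Suppose U, V, W are nonzero vectors with a_U, a_V, a_W all nonzero, with the three projective quadrances q_u = q(V,W), q_v = q(U,W), q_w = q(U,V) all nonzero, and with all three quantities a_U·a_V − b_{UV}², a_U·a_W − b_{UW}², a_V·a_W − b_{VW}² nonzero. If the projective spread S_w equals 1, then S_u = q_u/q_w. -/

import Mathlib

/-- The projective quadrance between the projective points `[U]` and `[V]`. -/
def projQuadrance {F : Type*} [Field F] {M : Type*} [AddCommGroup M] [Module F M]
    (B : LinearMap.BilinForm F M) (U V : M) : F :=
  1 - (B U V) ^ 2 / (B U U * B V V)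

/-- The projective spread between the projective lines `WU` and `WV`
(the spread at the vertex `[W]`). -/
def projSpread {F : Type*} [Field F] {M : Type*} [AddCommGroup M] [Module F M]
    (B : LinearMap.BilinForm F M) (W U V : M) : F :=
  1 - (B W W * B U V - B U W * B V W) ^ 2 /
      ((B U U * B W W - (B U W) ^ 2) * (B V V * B W W - (B V W) ^ 2))

theorem projective_thales_theorem
    {F : Type*} [Field F] (hchar : (2 : F) ≠ 0)
    {M : Type*} [AddCommGroup M] [Module F M]
    (B : LinearMap.BilinForm F M) (hsym : ∀ x y : M, B x y = B y x)
    (U V W : M) (hU : U ≠ 0) (hV : V ≠ 0) (hW : W ≠ 0)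
    (haU : B U U ≠ 0) (haV : B V V ≠ 0) (haW : B W W ≠ 0)
    (hqu : projQuadrance B V W ≠ 0) (hqv : projQuadrance B U W ≠ 0)
    (hqw : projQuadrance B U V ≠ 0)
    (hdUV : B U U * B V V - (B U V) ^ 2 ≠ 0)
    (hdUW : B U U * B W W - (B U W) ^ 2 ≠ 0)
    (hdVW : B V V * B W W - (B V W) ^ 2 ≠ 0)
    (hSw : projSpread B W U V = 1) :
    projSpread B U V W = projQuadrance B V W / projQuadrance B U V := by
  unfold projSpread projQuadrance at *
  rw [hsym V U, hsym W U] at *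
  set a := B U U
  set b := B V V
  set c := B W W
  set p := B U V
  set q := B U W
  set r := B V W
  clear hU hV hW hsym
  have e : c * p - q * r = 0 := by
    have h1 : (c * p - q * r) ^ 2 / ((a * c - q ^ 2) * (b * c - r ^ 2)) = 0 := by
      linear_combination -hSw
    have h2 : (c * p - q * r) ^ 2 = 0 := by
      rcases div_eq_zero_iff.mp h1 with h | h
      · exact h
      · exact absurd h (mul_ne_zero hdUW hdVW)
    exact pow_eq_zero_iff (two_ne_zero) |>.mp h2
  have h1 : b * a - p ^ 2 ≠ 0 := fun h => hdUV (by linear_combination h)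
  have h2 : c * a - q ^ 2 ≠ 0 := fun h => hdUW (by linear_combination h)
  have h3 : 1 - r ^ 2 / (b * c) ≠ 0 := hqu
  have h4 : 1 - p ^ 2 / (a * b) ≠ 0 := hqw
  field_simp
  ring_nf
  linear_combination (-a * (c * p - q * r)) * e
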